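/- Let Δ ⊆ ℝ⁴ be a reflexive polytope and let v₁, v₂, v₃ ∈ Δ ∩ ℤ⁴ be ℝ-linearly independent points with Cone(v₁,v₂,v₃) ∩ Δ ∩ ℤ⁴ = {0, v₁, v₂, v₃}, and suppose v₁, v₂, v₃ do not lie in a common proper face of Δ. Then there exist a vertex (extreme point) m of Δ* with m ∈ ℤ⁴ and distinct indices i, j ∈ {1, 2, 3} such that ⟨m, vᵢ⟩ = ⟨m, vⱼ⟩ = −1 and ⟨m, v_k⟩ = 0 for the remaining index k ∈ {1, 2, 3}. -/

import Mathlib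

open Pointwise

/-- The standard pairing `⟨m,n⟩ = ∑ i, mᵢ nᵢ` on `ℝ^d`. -/
def pairing {d : ℕ} (m n : Fin d → ℝ) : ℝ := ∑ i, m i * n i

/-- A point of `ℝ^d` is a lattice point if all coordinates are integers. -/
def IsLatticePt {d : ℕ} (v : Fin d → ℝ) : Prop := ∀ i, ∃ n : ℤ, v i = (n : ℝ)

/-- The set of lattice points of `ℝ^d`. -/
def latticePts (d : ℕ) : Set (Fin d → ℝ) := {v | IsLatticePt v}

/-- A lattice polytope is the convex hull of finitely many lattice points. -/
def IsLatticePolytope {d : ℕ} (Δ : Set (Fin d → ℝ)) : Prop :=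
  ∃ S : Finset (Fin d → ℝ), (S : Set (Fin d → ℝ)) ⊆ latticePts d ∧
    Δ = convexHull ℝ (S : Set (Fin d → ℝ))

/-- The dual polytope `Δ* = {m : ⟨m,n⟩ ≥ -1 for all n ∈ Δ}`. -/
def dualPolytope {d : ℕ} (Δ : Set (Fin d → ℝ)) : Set (Fin d → ℝ) :=
  {m | ∀ n ∈ Δ, -1 ≤ pairing m n}

/-- A reflexive polytope: a lattice polytope with `0` in its interior
whose dual polytope is again a lattice polytope. -/
def IsReflexive {d : ℕ} (Δ : Set (Fin d → ℝ)) : Prop :=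
  IsLatticePolytope Δ ∧ (0 : Fin d → ℝ) ∈ interior Δ ∧ IsLatticePolytope (dualPolytope Δ)

/-- `Cone(v₁,…,v_k) = {r₁v₁ + ⋯ + r_kv_k : rᵢ ≥ 0}`. -/
def coneOf {d k : ℕ} (v : Fin k → (Fin d → ℝ)) : Set (Fin d → ℝ) :=
  {x | ∃ r : Fin k → ℝ, (∀ i, 0 ≤ r i) ∧ x = ∑ i, r i • v i}

/-- `r·∂Δ`, the frontier (topological boundary) of the dilate `rΔ`. -/
def bdry {d : ℕ} (r : ℝ) (Δ : Set (Fin d → ℝ)) : Set (Fin d → ℝ) := frontier (r • Δ)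

/-- The points of `S` lie in a common proper face of `Δ`: there is `u` with
`⟨u,x⟩ ≤ 1` on `Δ` and `⟨u,v⟩ = 1` for all `v ∈ S`. -/
def InCommonFace {d : ℕ} (Δ : Set (Fin d → ℝ)) (S : Set (Fin d → ℝ)) : Prop :=
  ∃ u : Fin d → ℝ, (∀ x ∈ Δ, pairing u x ≤ 1) ∧ ∀ v ∈ S, pairing u v = 1

/-- Coordinatewise cast of an integer vector to a real vector. -/
def toRealVec {d : ℕ} (n : Fin d → ℤ) : Fin d → ℝ := fun i => (n i : ℝ)

-- basic pairing lemmas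
lemma pairing_neg_left {d : ℕ} (m n : Fin d → ℝ) : pairing (-m) n = -pairing m n := by
  simp [pairing, neg_mul, Finset.sum_neg_distrib]

lemma pairing_add_right {d : ℕ} (m a b : Fin d → ℝ) :
    pairing m (a + b) = pairing m a + pairing m b := by
  simp [pairing, mul_add, Finset.sum_add_distrib]

lemma pairing_int {d : ℕ} (m w : Fin d → ℝ) (hm : IsLatticePt m) (hw : IsLatticePt w) :
    ∃ z : ℤ, pairing m w = (z : ℝ) := by
  choose a ha using hm
  choose b hb using hw
  refine ⟨∑ i, a i * b i, ?_⟩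
  unfold pairing
  push_cast
  exact Finset.sum_congr rfl fun i _ => by rw [ha i, hb i]

/-- If `Δ` is reflexive and `x ∉ Δ`, there is a lattice extreme point `m` of the
dual polytope with `pairing m x < -1`. -/
lemma exists_extreme_pairing_lt {d : ℕ} (Δ : Set (Fin d → ℝ)) (hΔ : IsReflexive Δ)
    (x : Fin d → ℝ) (hx : x ∉ Δ) :
    ∃ m : Fin d → ℝ, IsLatticePt m ∧ m ∈ Set.extremePoints ℝ (dualPolytope Δ) ∧
      pairing m x < -1 := by
  obtain ⟨⟨S, hSlat, hSΔ⟩, h0, ⟨S', hS'lat, hS'D⟩⟩ := hΔ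
  -- Δ is compact convex closed
  have hΔconv : Convex ℝ Δ := hSΔ ▸ convex_convexHull ℝ _
  have hΔcomp : IsCompact Δ := hSΔ ▸ S.finite_toSet.isCompact_convexHull ℝ
  have h0Δ : (0 : Fin d → ℝ) ∈ Δ := interior_subset h0
  -- separate x from Δ
  obtain ⟨f, u, hfs, hfx⟩ := geometric_hahn_banach_closed_point hΔconv hΔcomp.isClosed hx
  have hu : 0 < u := by have := hfs 0 h0Δ; simpa using this
  -- build m₀ ∈ dual with pairing m₀ x < -1
  set m₀ : Fin d → ℝ := fun i => -(u⁻¹) * f (fun j => if i = j then 1 else 0) with hm₀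
  have hpair : ∀ y : Fin d → ℝ, pairing m₀ y = -(u⁻¹) * f y := by
    intro y
    have h2 : f y = ∑ i, y i * f (fun j => if i = j then 1 else 0) := by
      conv_lhs => rw [pi_eq_sum_univ y]
      rw [map_sum]
      simp [smul_eq_mul]
    rw [h2, pairing, Finset.mul_sum]
    exact Finset.sum_congr rfl fun i _ => by rw [hm₀]; ring
  have huu : u * u⁻¹ = 1 := mul_inv_cancel₀ hu.ne'
  have hm₀D : m₀ ∈ dualPolytope Δ := by
    intro n hn
    rw [hpair n]
    have := hfs n hn
    nlinarith [mul_pos hu (inv_pos.mpr hu)]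
  have hm₀x : pairing m₀ x < -1 := by
    rw [hpair x]
    nlinarith [mul_pos hu (inv_pos.mpr hu)]
  -- dual polytope is compact
  set D := dualPolytope Δ with hD
  have hDcomp : IsCompact D := hS'D ▸ S'.finite_toSet.isCompact_convexHull ℝ
  -- the exposed face minimizing pairing · x
  set l : (Fin d → ℝ) →L[ℝ] ℝ := ∑ i, (-x i) • ContinuousLinearMap.proj i with hl
  have hly : ∀ y : Fin d → ℝ, l y = -pairing y x := by
    intro y
    rw [hl, pairing, ← Finset.sum_neg_distrib]
    simp only [ContinuousLinearMap.sum_apply, ContinuousLinearMap.smul_apply,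
      ContinuousLinearMap.proj_apply, smul_eq_mul]
    exact Finset.sum_congr rfl fun i _ => by ring
  obtain ⟨p, hpD, hp⟩ := hDcomp.exists_isMaxOn ⟨m₀, hm₀D⟩ l.continuous.continuousOn
  set B := l.toExposed D with hB
  have hBexp : IsExposed ℝ D B := ContinuousLinearMap.toExposed.isExposed
  have hBne : B.Nonempty := ⟨p, hpD, fun z hz => hp hz⟩
  obtain ⟨e, he⟩ := (hBexp.isCompact hDcomp).extremePoints_nonempty hBne
  have heD : e ∈ Set.extremePoints ℝ D :=
    hBexp.isExtreme.extremePoints_subset_extremePoints he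
  have heS' : e ∈ (S' : Set (Fin d → ℝ)) :=
    extremePoints_convexHull_subset (hS'D ▸ heD)
  refine ⟨e, hS'lat heS', heD, ?_⟩
  have heB : e ∈ B := extremePoints_subset he
  have hle : l m₀ ≤ l e := heB.2 m₀ hm₀D
  rw [hly m₀, hly e] at hle
  linarith

/-- If `v₁,v₂,v₃` are linearly independent lattice points of a
reflexive polytope `Δ ⊆ ℝ⁴` with `Cone(v₁,v₂,v₃) ∩ Δ ∩ ℤ⁴ = {0,v₁,v₂,v₃}` not lying in
a common proper face of `Δ`, then there is a lattice vertex `m` of `Δ*` and distinct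
indices `i, j` with `⟨m,vᵢ⟩ = ⟨m,vⱼ⟩ = -1` and `⟨m,v_k⟩ = 0` for the remaining `k`. -/
theorem exists_vertex_of_dual_for_three_cone
    (Δ : Set (Fin 4 → ℝ)) (hΔ : IsReflexive Δ)
    (v : Fin 3 → (Fin 4 → ℝ))
    (hvΔ : ∀ i, v i ∈ Δ) (hvL : ∀ i, IsLatticePt (v i))
    (hli : LinearIndependent ℝ v)
    (hcone : coneOf v ∩ Δ ∩ latticePts 4 = insert (0 : Fin 4 → ℝ) (Set.range v))
    (hface : ¬ InCommonFace Δ (Set.range v)) :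
    ∃ m : Fin 4 → ℝ, IsLatticePt m ∧ m ∈ Set.extremePoints ℝ (dualPolytope Δ) ∧
      ∃ i j k : Fin 3, i ≠ j ∧ i ≠ k ∧ j ≠ k ∧
        pairing m (v i) = -1 ∧ pairing m (v j) = -1 ∧ pairing m (v k) = 0 := by
  classical
  set x : Fin 4 → ℝ := v 0 + v 1 + v 2 with hx
  have hxlat : IsLatticePt x := by
    intro i
    obtain ⟨a, ha⟩ := hvL 0 i
    obtain ⟨b, hb⟩ := hvL 1 i
    obtain ⟨c, hc⟩ := hvL 2 i
    exact ⟨a + b + c, by simp [hx, ha, hb, hc]⟩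
  have hxcone : x ∈ {y | ∃ r : Fin 3 → ℝ, (∀ i, 0 ≤ r i) ∧ y = ∑ i, r i • v i} :=
    ⟨fun _ => 1, fun _ => zero_le_one, by simp [hx, Fin.sum_univ_three]⟩
  have hli' := Fintype.linearIndependent_iff.mp hli
  have hxne : x ∉ insert (0 : Fin 4 → ℝ) (Set.range v) := by
    intro hmem
    rcases Set.mem_insert_iff.mp hmem with h0 | ⟨j, hj⟩
    · have hzz : ∑ i : Fin 3, (1 : ℝ) • v i = 0 := by
        simpa [Fin.sum_univ_three] using h0
      exact one_ne_zero (hli' _ hzz 0)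
    · set g : Fin 3 → ℝ := fun i => if i = j then 0 else 1 with hg
      have hzz : ∑ i, g i • v i = x - v j := by
        fin_cases j <;> simp [hg, hx, Fin.sum_univ_three] <;> abel
      have hz0 : ∑ i, g i • v i = 0 := by rw [hzz, sub_eq_zero]; exact hj.symm
      obtain ⟨i, hi⟩ := exists_ne j
      have := hli' g hz0 i
      rw [hg] at this
      simp [hi] at this
  have hxΔ : x ∉ Δ := fun hmem => hxne (hcone ▸ ⟨⟨hxcone, hmem⟩, hxlat⟩)
  obtain ⟨m, hmlat, hmext, hmx⟩ := exists_extreme_pairing_lt Δ hΔ x hxΔ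
  have hmD : m ∈ dualPolytope Δ := extremePoints_subset hmext
  choose z hz using fun i => pairing_int m (v i) hmlat (hvL i)
  have haz : ∀ i, (-1 : ℤ) ≤ z i := by
    intro i
    have h1 : (-1 : ℝ) ≤ (z i : ℝ) := (hz i) ▸ hmD (v i) (hvΔ i)
    exact_mod_cast h1
  have hsum : ((z 0 + z 1 + z 2 : ℤ) : ℝ) < -1 := by
    push_cast
    rw [← hz 0, ← hz 1, ← hz 2]
    have : pairing m x = pairing m (v 0) + pairing m (v 1) + pairing m (v 2) := by
      rw [hx, pairing_add_right, pairing_add_right]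
    linarith
  have hZ : z 0 + z 1 + z 2 ≤ -2 := by
    have : (z 0 + z 1 + z 2 : ℤ) < -1 := by exact_mod_cast hsum
    omega
  have hnotall : ¬(z 0 = -1 ∧ z 1 = -1 ∧ z 2 = -1) := by
    rintro ⟨h0, h1, h2⟩
    apply hface
    have hzall : ∀ i, pairing m (v i) = -1 := by
      intro i
      rw [hz i]
      fin_cases i <;> simp [h0, h1, h2]
    refine ⟨-m, fun y hy => ?_, ?_⟩
    · rw [pairing_neg_left]
      linarith [hmD y hy]
    · rintro w ⟨i, rfl⟩
      rw [pairing_neg_left, hzall i]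
      norm_num
  have h0 := haz 0; have h1 := haz 1; have h2 := haz 2
  have hcases : (z 0 = -1 ∧ z 1 = -1 ∧ z 2 = 0) ∨ (z 0 = -1 ∧ z 2 = -1 ∧ z 1 = 0) ∨
      (z 1 = -1 ∧ z 2 = -1 ∧ z 0 = 0) := by omega
  refine ⟨m, hmlat, hmext, ?_⟩
  rcases hcases with ⟨e0, e1, e2⟩ | ⟨e0, e1, e2⟩ | ⟨e0, e1, e2⟩
  · exact ⟨0, 1, 2, by decide, by decide, by decide,
      by rw [hz 0, e0]; norm_num, by rw [hz 1, e1]; norm_num, by rw [hz 2, e2]; norm_num⟩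
  · exact ⟨0, 2, 1, by decide, by decide, by decide,
      by rw [hz 0, e0]; norm_num, by rw [hz 2, e1]; norm_num, by rw [hz 1, e2]; norm_num⟩
  · exact ⟨1, 2, 0, by decide, by decide, by decide,
      by rw [hz 1, e0]; norm_num, by rw [hz 2, e1]; norm_num, by rw [hz 0, e2]; norm_num⟩
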